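/- Given the inverse inequality ‖u‖_{H¹(e)} ≤ C(p+1)²‖u‖_{L²(e)} for polynomials u of degree ≤ p+1 on an interval e, and an interpolation operator I_p with ‖u − I_p u‖_{H¹} ≤ C(p+1)^{-1}‖u‖_{H²} and ‖u − I_p u‖_{L²} ≤ C(p+1)^{-m}‖u‖_{H^m} (m = 1, 2), the L²-orthogonal projection Q* onto degree ≤ p+1 polynomials vanishing at the endpoints satisfies ‖u − Q*u‖_{H¹(e)} ≤ C‖u‖_{H²(e)} for all u ∈ H²(e) ∩ H¹₀(e), with C independent of p. -/

import Mathlib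

open MeasureTheory

/-- Univariate polynomial functions of degree ≤ n. -/
def PolySet (n : ℕ) : Set (ℝ → ℝ) :=
  {f | ∃ q : Polynomial ℝ, q.natDegree ≤ n ∧ ∀ x, f x = q.eval x}

/-- Polynomials of degree ≤ p+1 on the interval `[α,β]` vanishing at the endpoints. -/
def PolyZero (α β : ℝ) (p : ℕ) : Set (ℝ → ℝ) :=
  {f | f ∈ PolySet (p + 1) ∧ f α = 0 ∧ f β = 0}

/-- L² norm on the interval `(α,β)`. -/
noncomputable def L2norm (α β : ℝ) (u : ℝ → ℝ) : ℝ :=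
  (∫ x in α..β, (u x) ^ 2) ^ (1/2 : ℝ)

/-- H¹ norm on the interval `(α,β)`. -/
noncomputable def H1norm (α β : ℝ) (u : ℝ → ℝ) : ℝ :=
  (∫ x in α..β, (u x) ^ 2 + (deriv u x) ^ 2) ^ (1/2 : ℝ)

/-- H² norm on the interval `(α,β)`. -/
noncomputable def H2norm (α β : ℝ) (u : ℝ → ℝ) : ℝ :=
  (∫ x in α..β, (u x) ^ 2 + (deriv u x) ^ 2 + (deriv (deriv u) x) ^ 2) ^ (1/2 : ℝ)

private lemma pair_expand (α β t : ℝ) (f f' g g' : ℝ → ℝ)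
    (hf : Continuous f) (hf' : Continuous f') (hg : Continuous g) (hg' : Continuous g') :
    (∫ x in α..β, (t * g x - f x) ^ 2 + (t * g' x - f' x) ^ 2)
      = t ^ 2 * (∫ x in α..β, g x ^ 2 + g' x ^ 2)
        - 2 * t * (∫ x in α..β, f x * g x + f' x * g' x)
        + (∫ x in α..β, f x ^ 2 + f' x ^ 2) := by
  have h1 : IntervalIntegrable (fun x => t ^ 2 * (g x ^ 2 + g' x ^ 2)) volume α β :=
    (continuous_const.mul ((hg.pow 2).add (hg'.pow 2))).intervalIntegrable α β
  have h2 : IntervalIntegrable (fun x => 2 * t * (f x * g x + f' x * g' x)) volume α β :=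
    (continuous_const.mul ((hf.mul hg).add (hf'.mul hg'))).intervalIntegrable α β
  have h3 : IntervalIntegrable (fun x => f x ^ 2 + f' x ^ 2) volume α β :=
    ((hf.pow 2).add (hf'.pow 2)).intervalIntegrable α β
  rw [intervalIntegral.integral_congr
    (g := fun x => (t ^ 2 * (g x ^ 2 + g' x ^ 2) - 2 * t * (f x * g x + f' x * g' x))
      + (f x ^ 2 + f' x ^ 2)) (fun x _ => by ring),
    intervalIntegral.integral_add (h1.sub h2) h3,
    intervalIntegral.integral_sub h1 h2,
    intervalIntegral.integral_const_mul, intervalIntegral.integral_const_mul]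

private lemma pair_CS (α β : ℝ) (hle : α ≤ β) (f f' g g' : ℝ → ℝ)
    (hf : Continuous f) (hf' : Continuous f') (hg : Continuous g) (hg' : Continuous g') :
    (∫ x in α..β, f x * g x + f' x * g' x)
      ≤ Real.sqrt (∫ x in α..β, f x ^ 2 + f' x ^ 2)
        * Real.sqrt (∫ x in α..β, g x ^ 2 + g' x ^ 2) := by
  set A := ∫ x in α..β, f x ^ 2 + f' x ^ 2 with hA
  set B := ∫ x in α..β, g x ^ 2 + g' x ^ 2 with hB
  set X := ∫ x in α..β, f x * g x + f' x * g' x with hX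
  have hA0 : 0 ≤ A := intervalIntegral.integral_nonneg hle (fun x _ => by positivity)
  have hB0 : 0 ≤ B := intervalIntegral.integral_nonneg hle (fun x _ => by positivity)
  have key : ∀ t : ℝ, 0 ≤ B * (t * t) + (-(2 * X)) * t + A := by
    intro t
    have h0 : 0 ≤ ∫ x in α..β, (t * g x - f x) ^ 2 + (t * g' x - f' x) ^ 2 :=
      intervalIntegral.integral_nonneg hle (fun x _ => by positivity)
    rw [pair_expand α β t f f' g g' hf hf' hg hg'] at h0
    nlinarith [h0]
  have hd := discrim_le_zero key
  rw [discrim] at hd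
  have hX2 : X ^ 2 ≤ A * B := by nlinarith [hd]
  calc X ≤ |X| := le_abs_self X
    _ = Real.sqrt (X ^ 2) := (Real.sqrt_sq_eq_abs X).symm
    _ ≤ Real.sqrt (A * B) := Real.sqrt_le_sqrt hX2
    _ = Real.sqrt A * Real.sqrt B := Real.sqrt_mul hA0 B

private lemma pair_minkowski (α β : ℝ) (hle : α ≤ β) (f f' g g' : ℝ → ℝ)
    (hf : Continuous f) (hf' : Continuous f') (hg : Continuous g) (hg' : Continuous g') :
    Real.sqrt (∫ x in α..β, (f x + g x) ^ 2 + (f' x + g' x) ^ 2)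
      ≤ Real.sqrt (∫ x in α..β, f x ^ 2 + f' x ^ 2)
        + Real.sqrt (∫ x in α..β, g x ^ 2 + g' x ^ 2) := by
  set A := ∫ x in α..β, f x ^ 2 + f' x ^ 2 with hA
  set B := ∫ x in α..β, g x ^ 2 + g' x ^ 2 with hB
  set X := ∫ x in α..β, f x * g x + f' x * g' x with hX
  have hA0 : 0 ≤ A := intervalIntegral.integral_nonneg hle (fun x _ => by positivity)
  have hB0 : 0 ≤ B := intervalIntegral.integral_nonneg hle (fun x _ => by positivity)
  have hCS := pair_CS α β hle f f' g g' hf hf' hg hg'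
  have hexp : (∫ x in α..β, (f x + g x) ^ 2 + (f' x + g' x) ^ 2) = A + 2 * X + B := by
    have := pair_expand α β (-1) f f' g g' hf hf' hg hg'
    have hcong : (∫ x in α..β, (f x + g x) ^ 2 + (f' x + g' x) ^ 2)
        = ∫ x in α..β, ((-1) * g x - f x) ^ 2 + ((-1) * g' x - f' x) ^ 2 :=
      intervalIntegral.integral_congr (fun x _ => by ring)
    rw [hcong, this]; ring
  rw [hexp]
  have hsum : A + 2 * X + B ≤ (Real.sqrt A + Real.sqrt B) ^ 2 := by
    have e1 : Real.sqrt A ^ 2 = A := Real.sq_sqrt hA0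
    have e2 : Real.sqrt B ^ 2 = B := Real.sq_sqrt hB0
    nlinarith [hCS]
  calc Real.sqrt (A + 2 * X + B) ≤ Real.sqrt ((Real.sqrt A + Real.sqrt B) ^ 2) :=
        Real.sqrt_le_sqrt hsum
    _ = Real.sqrt A + Real.sqrt B := by
        rw [Real.sqrt_sq (by positivity)]

private lemma L2norm_eq (α β : ℝ) (f g : ℝ → ℝ) :
    L2norm α β (f - g) = Real.sqrt (∫ x in α..β, (f x - g x) ^ 2) := by
  rw [L2norm, ← Real.sqrt_eq_rpow]
  simp only [Pi.sub_apply]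

private lemma H1norm_eq (α β : ℝ) (f g : ℝ → ℝ)
    (hf : Differentiable ℝ f) (hg : Differentiable ℝ g) :
    H1norm α β (f - g)
      = Real.sqrt (∫ x in α..β, (f x - g x) ^ 2 + (deriv f x - deriv g x) ^ 2) := by
  rw [H1norm, ← Real.sqrt_eq_rpow]
  congr 1
  refine intervalIntegral.integral_congr (fun x _ => ?_)
  have : deriv (f - g) x = deriv f x - deriv g x := by
    rw [Pi.sub_def, deriv_fun_sub (hf x) (hg x)]
  rw [this, Pi.sub_apply]

private lemma L2norm_nonneg (α β : ℝ) (hle : α ≤ β) (u : ℝ → ℝ) : 0 ≤ L2norm α β u :=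
  Real.rpow_nonneg (intervalIntegral.integral_nonneg hle fun x _ => by positivity) _

private lemma H1norm_nonneg (α β : ℝ) (hle : α ≤ β) (u : ℝ → ℝ) : 0 ≤ H1norm α β u :=
  Real.rpow_nonneg (intervalIntegral.integral_nonneg hle fun x _ => by positivity) _

private lemma H2norm_nonneg (α β : ℝ) (hle : α ≤ β) (u : ℝ → ℝ) : 0 ≤ H2norm α β u :=
  Real.rpow_nonneg (intervalIntegral.integral_nonneg hle fun x _ => by positivity) _

private lemma H1norm_one (α β : ℝ) :
    H1norm α β (fun _ => (1:ℝ)) = (β - α) ^ (1/2 : ℝ) := by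
  rw [H1norm]
  congr 1
  have hd : deriv (fun _ : ℝ => (1:ℝ)) = fun _ => (0:ℝ) := by funext x; simp
  rw [hd]
  simp

private lemma H2norm_one (α β : ℝ) :
    H2norm α β (fun _ => (1:ℝ)) = (β - α) ^ (1/2 : ℝ) := by
  rw [H2norm]
  congr 1
  have hd : deriv (fun _ : ℝ => (1:ℝ)) = fun _ => (0:ℝ) := by funext x; simp
  have hd0 : deriv (fun _ : ℝ => (0:ℝ)) = fun _ => (0:ℝ) := by funext x; simp
  rw [hd, hd0]
  simp

private lemma L2norm_one (α β : ℝ) :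
    L2norm α β (fun _ => (1:ℝ)) = (β - α) ^ (1/2 : ℝ) := by
  rw [L2norm]
  congr 1
  simp

private lemma single_CS (α β : ℝ) (hle : α ≤ β) (f g : ℝ → ℝ)
    (hf : Continuous f) (hg : Continuous g) :
    (∫ x in α..β, f x * g x)
      ≤ Real.sqrt (∫ x in α..β, f x ^ 2) * Real.sqrt (∫ x in α..β, g x ^ 2) := by
  have h := pair_CS α β hle f (fun _ => 0) g (fun _ => 0) hf continuous_const hg continuous_const
  simpa using h

private lemma single_minkowski (α β : ℝ) (hle : α ≤ β) (f g : ℝ → ℝ)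
    (hf : Continuous f) (hg : Continuous g) :
    Real.sqrt (∫ x in α..β, (f x + g x) ^ 2)
      ≤ Real.sqrt (∫ x in α..β, f x ^ 2) + Real.sqrt (∫ x in α..β, g x ^ 2) := by
  have h := pair_minkowski α β hle f (fun _ => 0) g (fun _ => 0) hf continuous_const hg continuous_const
  simpa using h

set_option maxHeartbeats 1000000 in
/-- Given the inverse inequality
`‖v‖_{H¹} ≤ C_inv (p+1)² ‖v‖_{L²}` for polynomials of degree ≤ p+1, and an
interpolation operator `I p` into the degree ≤ p+1 polynomials vanishing at the
endpoints with `‖u − I_p u‖_{H¹} ≤ C_I (p+1)⁻¹ ‖u‖_{H²}` and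
`‖u − I_p u‖_{L²} ≤ C_I (p+1)^{-m} ‖u‖_{H^m}` for `m = 1, 2`, the L²-orthogonal
projection `Q p` onto polynomials of degree ≤ p+1 vanishing at the endpoints
satisfies `‖u − Q_p u‖_{H¹} ≤ C ‖u‖_{H²}` for all `u ∈ H² ∩ H¹₀`, uniformly in `p`. -/
theorem H1_error_L2_projection (α β : ℝ) (hαβ : α < β)
    (Q : ℕ → (ℝ → ℝ) → (ℝ → ℝ))
    (hQmem : ∀ p u, Q p u ∈ PolyZero α β p)
    (hQorth : ∀ p u, ∀ v ∈ PolyZero α β p, ∫ x in α..β, (u x - Q p u x) * v x = 0)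
    (I : ℕ → (ℝ → ℝ) → (ℝ → ℝ)) (CI : ℝ)
    (hImem : ∀ p u, ContDiff ℝ 1 u → u α = 0 → u β = 0 → I p u ∈ PolyZero α β p)
    (hIH1 : ∀ p u, ContDiff ℝ 2 u →
      H1norm α β (u - I p u) ≤ CI * ((p:ℝ) + 1)⁻¹ * H2norm α β u)
    (hIL2₁ : ∀ p u, ContDiff ℝ 1 u →
      L2norm α β (u - I p u) ≤ CI * ((p:ℝ) + 1)⁻¹ * H1norm α β u)
    (hIL2₂ : ∀ p u, ContDiff ℝ 2 u →
      L2norm α β (u - I p u) ≤ CI * (((p:ℝ) + 1)⁻¹) ^ 2 * H2norm α β u)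
    (Cinv : ℝ)
    (hinv : ∀ p : ℕ, ∀ v ∈ PolySet (p + 1),
      H1norm α β v ≤ Cinv * ((p:ℝ) + 1) ^ 2 * L2norm α β v) :
    ∃ C : ℝ, 0 < C ∧ ∀ p : ℕ, ∀ u : ℝ → ℝ, ContDiff ℝ 2 u → u α = 0 → u β = 0 →
      H1norm α β (u - Q p u) ≤ C * H2norm α β u := by
  have hle : α ≤ β := hαβ.le
  have hba : (0:ℝ) < (β - α) ^ (1/2 : ℝ) := Real.rpow_pos_of_pos (by linarith) _
  have hCI : 0 ≤ CI := by
    have h := hIH1 0 (fun _ => 1) contDiff_const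
    rw [H2norm_one] at h
    norm_num at h
    have h0 := H1norm_nonneg α β hle ((fun _ => (1:ℝ)) - I 0 (fun _ => 1))
    nlinarith [h, h0, hba]
  have hCinv : 0 ≤ Cinv := by
    have hmem : (fun _ : ℝ => (1:ℝ)) ∈ PolySet (0 + 1) := ⟨1, by simp, fun x => by simp⟩
    have h := hinv 0 _ hmem
    rw [H1norm_one, L2norm_one] at h
    norm_num at h
    nlinarith [h, hba]
  refine ⟨CI + 2 * Cinv * CI + 1, by nlinarith, ?_⟩
  intro p u hu huα huβ
  obtain ⟨⟨q, hqdeg, hq⟩, hqα, hqβ⟩ := hQmem p u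
  obtain ⟨⟨r, hrdeg, hr⟩, hrα, hrβ⟩ := hImem p u (hu.of_le one_le_two) huα huβ
  have hQf : Q p u = fun x => q.eval x := funext hq
  have hIf : I p u = fun x => r.eval x := funext hr
  have cu : Continuous u := hu.continuous
  have cu' : Continuous (deriv u) := hu.continuous_deriv one_le_two
  have du : Differentiable ℝ u := hu.differentiable two_ne_zero
  have cq : Continuous fun x => q.eval x := q.continuous
  have cr : Continuous fun x => r.eval x := r.continuous
  have dq : Differentiable ℝ fun x => q.eval x := q.differentiable
  have dr : Differentiable ℝ fun x => r.eval x := r.differentiable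
  have cq' : Continuous (deriv fun x => q.eval x) := by
    have hdq : (deriv fun x => q.eval x) = fun x => q.derivative.eval x :=
      funext fun x => q.deriv
    rw [hdq]; exact q.derivative.continuous
  have cr' : Continuous (deriv fun x => r.eval x) := by
    have hdr : (deriv fun x => r.eval x) = fun x => r.derivative.eval x :=
      funext fun x => r.deriv
    rw [hdr]; exact r.derivative.continuous
  -- membership of the difference
  have hmemZ : (I p u - Q p u) ∈ PolyZero α β p := by
    refine ⟨⟨r - q, le_trans (Polynomial.natDegree_sub_le r q) (max_le hrdeg hqdeg),
      fun x => ?_⟩, ?_, ?_⟩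
    · simp [Pi.sub_apply, hq x, hr x]
    · simp [Pi.sub_apply, hrα, hqα]
    · simp [Pi.sub_apply, hrβ, hqβ]
  -- orthogonality
  have horth := hQorth p u _ hmemZ
  rw [hIf, hQf] at horth
  simp only [Pi.sub_apply] at horth
  -- hq rewriting inside horth: u x - Q p u x with Q p u already rewritten? hQorth stated with Q p u x
  -- nonnegativity of relevant integrals
  have hS0 : 0 ≤ ∫ x in α..β, (u x - q.eval x) ^ 2 :=
    intervalIntegral.integral_nonneg hle (fun x _ => by positivity)
  have hA0 : 0 ≤ ∫ x in α..β, (u x - r.eval x) ^ 2 :=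
    intervalIntegral.integral_nonneg hle (fun x _ => by positivity)
  -- split
  have hi1 : IntervalIntegrable (fun x => (u x - q.eval x) * (u x - r.eval x)) volume α β :=
    ((cu.sub cq).mul (cu.sub cr)).intervalIntegrable α β
  have hi2 : IntervalIntegrable (fun x => (u x - q.eval x) * (r.eval x - q.eval x)) volume α β :=
    ((cu.sub cq).mul (cr.sub cq)).intervalIntegrable α β
  have hsplit : (∫ x in α..β, (u x - q.eval x) ^ 2)
      = (∫ x in α..β, (u x - q.eval x) * (u x - r.eval x))
        + ∫ x in α..β, (u x - q.eval x) * (r.eval x - q.eval x) := by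
    rw [← intervalIntegral.integral_add hi1 hi2]
    exact intervalIntegral.integral_congr (fun x _ => by ring)
  rw [horth, add_zero] at hsplit
  have hCSp := single_CS α β hle (fun x => u x - q.eval x) (fun x => u x - r.eval x)
    (cu.sub cq) (cu.sub cr)
  have hproj : Real.sqrt (∫ x in α..β, (u x - q.eval x) ^ 2)
      ≤ Real.sqrt (∫ x in α..β, (u x - r.eval x) ^ 2) := by
    rcases eq_or_lt_of_le (Real.sqrt_nonneg (∫ x in α..β, (u x - q.eval x) ^ 2)) with h | h
    · rw [← h]; exact Real.sqrt_nonneg _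
    · have hmm : Real.sqrt (∫ x in α..β, (u x - q.eval x) ^ 2)
          * Real.sqrt (∫ x in α..β, (u x - q.eval x) ^ 2)
          ≤ Real.sqrt (∫ x in α..β, (u x - q.eval x) ^ 2)
          * Real.sqrt (∫ x in α..β, (u x - r.eval x) ^ 2) := by
        rw [Real.mul_self_sqrt hS0]
        calc (∫ x in α..β, (u x - q.eval x) ^ 2)
            = ∫ x in α..β, (u x - q.eval x) * (u x - r.eval x) := hsplit
          _ ≤ _ := hCSp
      exact le_of_mul_le_mul_left hmm h
  -- L2 triangle for middle term
  have hmidL2 : Real.sqrt (∫ x in α..β, (r.eval x - q.eval x) ^ 2)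
      ≤ Real.sqrt (∫ x in α..β, (u x - r.eval x) ^ 2)
        + Real.sqrt (∫ x in α..β, (u x - q.eval x) ^ 2) := by
    have h := single_minkowski α β hle (fun x => r.eval x - u x) (fun x => u x - q.eval x)
      (cr.sub cu) (cu.sub cq)
    have e1 : (∫ x in α..β, ((r.eval x - u x) + (u x - q.eval x)) ^ 2)
        = ∫ x in α..β, (r.eval x - q.eval x) ^ 2 :=
      intervalIntegral.integral_congr (fun x _ => by ring)
    have e2 : (∫ x in α..β, (r.eval x - u x) ^ 2)
        = ∫ x in α..β, (u x - r.eval x) ^ 2 :=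
      intervalIntegral.integral_congr (fun x _ => by ring)
    rw [e1, e2] at h
    exact h
  -- interpolation L2 bound
  have hI2 := hIL2₂ p u hu
  rw [hIf, L2norm_eq α β u (fun x => r.eval x)] at hI2
  -- H1 triangle
  have htri : H1norm α β (u - fun x => q.eval x)
      ≤ H1norm α β (u - fun x => r.eval x)
        + H1norm α β ((fun x => r.eval x) - fun x => q.eval x) := by
    have h := pair_minkowski α β hle
      (fun x => u x - r.eval x) (fun x => deriv u x - deriv (fun y => r.eval y) x)
      (fun x => r.eval x - q.eval x) (fun x => deriv (fun y => r.eval y) x - deriv (fun y => q.eval y) x)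
      (cu.sub cr) (cu'.sub cr') (cr.sub cq) (cr'.sub cq')
    rw [H1norm_eq α β u (fun x => q.eval x) du dq,
      H1norm_eq α β u (fun x => r.eval x) du dr,
      H1norm_eq α β (fun x => r.eval x) (fun x => q.eval x) dr dq]
    have e1 : (∫ x in α..β, ((u x - r.eval x) + (r.eval x - q.eval x)) ^ 2
          + ((deriv u x - deriv (fun y => r.eval y) x)
            + (deriv (fun y => r.eval y) x - deriv (fun y => q.eval y) x)) ^ 2)
        = ∫ x in α..β, (u x - q.eval x) ^ 2
          + (deriv u x - deriv (fun y => q.eval y) x) ^ 2 :=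
      intervalIntegral.integral_congr (fun x _ => by ring)
    rw [e1] at h
    exact h
  -- inverse inequality on middle term
  have hinv' := hinv p _ hmemZ.1
  rw [hIf, hQf] at hinv'
  rw [L2norm_eq α β (fun x => r.eval x) (fun x => q.eval x)] at hinv'
  -- interpolation H1 bound
  have hIH1' := hIH1 p u hu
  rw [hIf] at hIH1'
  have hH1eqA : H1norm α β (u - fun x => r.eval x)
      = Real.sqrt (∫ x in α..β, (u x - r.eval x) ^ 2
          + (deriv u x - deriv (fun y => r.eval y) x) ^ 2) :=
    H1norm_eq α β u (fun x => r.eval x) du dr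
  -- final arithmetic
  rw [hQf]
  have hH2 : 0 ≤ H2norm α β u := H2norm_nonneg α β hle u
  have hP : (0:ℝ) < (p:ℝ) + 1 := by positivity
  have hPinv : ((p:ℝ) + 1)⁻¹ ≤ 1 := by
    rw [inv_le_one_iff₀]; right; simp
  have hPinv0 : 0 ≤ ((p:ℝ) + 1)⁻¹ := by positivity
  have hPP : ((p:ℝ) + 1) ^ 2 * (((p:ℝ) + 1)⁻¹) ^ 2 = 1 := by
    field_simp
  -- chain for the middle term
  have hmid2 : H1norm α β ((fun x => r.eval x) - fun x => q.eval x)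
      ≤ 2 * Cinv * CI * H2norm α β u := by
    have step1 : Real.sqrt (∫ x in α..β, (r.eval x - q.eval x) ^ 2)
        ≤ 2 * (CI * (((p:ℝ) + 1)⁻¹) ^ 2 * H2norm α β u) := by
      nlinarith [hmidL2, hproj, hI2]
    calc H1norm α β ((fun x => r.eval x) - fun x => q.eval x)
        ≤ Cinv * ((p:ℝ) + 1) ^ 2 * Real.sqrt (∫ x in α..β, (r.eval x - q.eval x) ^ 2) := hinv'
      _ ≤ Cinv * ((p:ℝ) + 1) ^ 2 * (2 * (CI * (((p:ℝ) + 1)⁻¹) ^ 2 * H2norm α β u)) := by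
          apply mul_le_mul_of_nonneg_left step1 (by positivity)
      _ = 2 * Cinv * CI * H2norm α β u * (((p:ℝ) + 1) ^ 2 * (((p:ℝ) + 1)⁻¹) ^ 2) := by ring
      _ = 2 * Cinv * CI * H2norm α β u := by rw [hPP, mul_one]
  have hfirst : H1norm α β (u - fun x => r.eval x) ≤ CI * H2norm α β u := by
    calc H1norm α β (u - fun x => r.eval x)
        ≤ CI * ((p:ℝ) + 1)⁻¹ * H2norm α β u := hIH1'
      _ ≤ CI * 1 * H2norm α β u := by
          apply mul_le_mul_of_nonneg_right _ hH2
          exact mul_le_mul_of_nonneg_left hPinv hCI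
      _ = CI * H2norm α β u := by ring
  nlinarith [htri, hmid2, hfirst, hH2]
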